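/- There exists a constant C₂ such that for the simple random walk on ℤ² the following holds: for all t ≥ 1, all x ∈ ℤ² with |x| ≤ t/2 (ℓ¹ norm), and all 0 ≤ n ≤ t, sup over z ∈ ℤ² with |z| ≤ n/2 and |x−z| ≤ (t−n)/2 of P(S_n = z, S_t = x)/P(S_t = x) is at most C₂/(1 + min(n, t−n)). -/

import Mathlib

open Finset

namespace MRB

def f (n m s i : ℕ) : ℕ := n.choose i * m.choose (s - i)

lemma f_step (n m s : ℕ) (i : ℕ) (h : i < s) :
    f n m s (i+1) * ((i+1) * (m - (s - i - 1))) = f n m s i * ((n - i) * (s - i)) := by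
  unfold f
  have h1 : n.choose (i+1) * (i+1) = n.choose i * (n - i) := Nat.choose_succ_right_eq n i
  have hb : s - i - 1 + 1 = s - i := by omega
  have h2 : m.choose (s - i - 1 + 1) * (s - i - 1 + 1) = m.choose (s-i-1) * (m - (s - i - 1)) :=
    Nat.choose_succ_right_eq m (s - i - 1)
  rw [hb] at h2
  have hc : s - (i+1) = s - i - 1 := by omega
  calc n.choose (i+1) * m.choose (s - (i+1)) * ((i+1) * (m - (s - i - 1)))
      = (n.choose (i+1) * (i+1)) * (m.choose (s-i-1) * (m - (s - i - 1))) := by rw [hc]; ring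
    _ = (n.choose i * (n-i)) * (m.choose (s-i) * (s-i)) := by rw [h1, ← h2]
    _ = n.choose i * m.choose (s - i) * ((n - i) * (s - i)) := by ring

lemma vander (n m s : ℕ) : (n+m).choose s = ∑ i ∈ range (s+1), f n m s i := by
  rw [Nat.add_choose_eq, Finset.Nat.sum_antidiagonal_eq_sum_range_succ_mk]
  rfl

lemma step_up (n m s i : ℕ) (hs : i < s) (him : s - i ≤ m)
    (hg : (i+1) * (m - (s - i - 1)) ≤ (n - i) * (s - i)) :
    f n m s i ≤ f n m s (i+1) := by
  have hX : 0 < (i+1) * (m - (s - i - 1)) := Nat.mul_pos (by omega) (by omega)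
  have he := f_step n m s i hs
  have h3 : f n m s i * ((i+1)*(m-(s-i-1))) ≤ f n m s i * ((n-i)*(s-i)) :=
    Nat.mul_le_mul_left _ hg
  rw [← he] at h3
  exact Nat.le_of_mul_le_mul_right h3 hX

lemma step_down (n m s i : ℕ) (hs : i < s)
    (hg : (n - i) * (s - i) ≤ (i+1) * (m - (s - i - 1))) :
    f n m s (i+1) ≤ f n m s i := by
  rcases Nat.eq_zero_or_pos ((i+1) * (m - (s - i - 1))) with h0 | hX
  · have h1 : m - (s - i - 1) = 0 := by
      rcases Nat.mul_eq_zero.mp h0 with h | h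
      · omega
      · exact h
    have h2 : (n - i) * (s - i) = 0 := by omega
    have hni : n ≤ i := by
      rcases Nat.mul_eq_zero.mp h2 with h | h
      · omega
      · omega
    have : n.choose (i+1) = 0 := Nat.choose_eq_zero_of_lt (by omega)
    simp [f, this]
  · have he := f_step n m s i hs
    have h3 : f n m s (i+1) * ((i+1)*(m-(s-i-1))) ≤ f n m s i * ((i+1)*(m-(s-i-1))) := by
      rw [he]; exact Nat.mul_le_mul_left _ hg
    exact Nat.le_of_mul_le_mul_right h3 hX


private lemma arith_hA2 (θ A d : ℕ) (hd : 0 < d) (hA : A = θ / d) : θ < A * d + d := by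
  subst hA
  have h := Nat.div_add_mod θ d
  have hmod : θ % d < d := Nat.mod_lt θ hd
  nlinarith

private lemma arith_hAn (n m s θ A d : ℕ) (hd : d = n + m + 2) (h1 : n + m ≤ 4*s)
    (hθeq : θ + (m+1) = (n+1)*s) (hA1 : A * d ≤ θ) (hsN : s < n + m) : A ≤ n := by
  by_contra hc
  push_neg at hc
  have h3 : (n+1) * d ≤ A * d := Nat.mul_le_mul_right d hc
  have h4 : (n+1)*s ≤ (n+1)*(n+m+1) := Nat.mul_le_mul_left _ (by omega)
  nlinarith

private lemma arith_hAs (n m s θ A d : ℕ) (hd : d = n + m + 2) (hθeq : θ + (m+1) = (n+1)*s)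
    (hA1 : A * d ≤ θ) (hs1 : 2048 ≤ s) (hc : s ≤ A) : False := by
  have h3 : s * d ≤ A * d := Nat.mul_le_mul_right d hc
  nlinarith

private lemma arith_hFA (n m s θ A d : ℕ) (hd : d = n + m + 2) (h1 : n + m ≤ 4*s)
    (e1 : (n+1)*s + n + 2 ≤ A*d + 2*d) : n + 1 ≤ 4*(A+2) := by
  have h4 : (n+1)*(n+m) ≤ (n+1)*(4*s) := Nat.mul_le_mul_left _ h1
  have h5 : (n+1)*d ≤ (4*(A+2))*d := by nlinarith
  exact Nat.le_of_mul_le_mul_right h5 (by omega)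

private lemma arith_hFB (n m s θ A d : ℕ) (hd : d = n + m + 2) (h2 : 4*s ≤ 3*(n+m))
    (e1 : (n+1)*s + n + 2 ≤ A*d + 2*d) : m + 1 + 4*s ≤ 4*(m + A + 2) := by
  have h5 : (m + 1 + 4*s)*d ≤ (4*(m+A+2))*d := by
    zify
    zify at e1 h2
    have hd' : (d:ℤ) = n + m + 2 := by exact_mod_cast congrArg (Nat.cast : ℕ → ℤ) hd
    nlinarith [e1, h2, mul_nonneg (show (0:ℤ) ≤ 3*(n+m) - 4*s by linarith)
      (show (0:ℤ) ≤ (m:ℤ) by positivity)]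
  exact Nat.le_of_mul_le_mul_right h5 (by omega)

private lemma arith_gup (n m s θ d i : ℕ) (hd : d = n + m + 2) (hθeq : θ + (m+1) = (n+1)*s)
    (hin : i ≤ n) (his : i < s) (him : s - i ≤ m) (hid : i * d ≤ θ) :
    (i+1) * (m - (s - i - 1)) ≤ (n - i) * (s - i) := by
  subst hd
  zify [show i ≤ n from hin, show i ≤ s by omega, show s - i - 1 ≤ m by omega,
    show 1 ≤ s - i by omega]
  zify at hθeq hid
  nlinarith [hθeq, hid]

private lemma arith_gdown (n m s θ A d i : ℕ) (hd : d = n + m + 2)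
    (hθeq : θ + (m+1) = (n+1)*s)
    (hin : i ≤ n) (his : i < s) (him : s - i ≤ m + 1) (hid : A * d + d ≤ i * d)
    (hA2 : θ < A * d + d) :
    (n - i) * (s - i) ≤ (i+1) * (m - (s - i - 1)) := by
  subst hd
  zify [show i ≤ n from hin, show i ≤ s by omega, show s - i - 1 ≤ m by omega,
    show 1 ≤ s - i by omega]
  zify at hθeq hid hA2
  nlinarith [hθeq, hid, hA2]

private lemma arith_hX (n m s L μ i d : ℕ) (hd : d = n + m + 2)
    (h8i : n + 1 ≤ 8*(i+1)) (h8m : m + 1 + 8*s ≤ 8*(m+i+1))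
    (hsm1 : s - i - 1 ≤ m)
    (hLsq : 256*(L*L) ≤ μ + 1) (hμn : μ ≤ n) (hμm : μ ≤ m) (hm4 : 1 ≤ m) :
    2*(L*(L*d)) ≤ (i+1)*(m - (s-i-1)) := by
  subst hd
  have h8m' : m + 1 ≤ 8*(m - (s-i-1)) := by omega
  have k1 : (μ+1)*(m+1) ≤ (n+1)*(m+1) := Nat.mul_le_mul_right _ (by omega)
  have k2 : (n+1)*(μ+1) ≤ (n+1)*(m+1) := Nat.mul_le_mul_left _ (by omega)
  have k3 : (μ+1)*(n+m+2) ≤ 2*((n+1)*(m+1)) := by nlinarith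
  have k4 : 256*(L*L)*(n+m+2) ≤ (μ+1)*(n+m+2) := Nat.mul_le_mul_right _ hLsq
  have k6 : (n+1)*(m+1) ≤ (8*(i+1))*(8*(m - (s-i-1))) := Nat.mul_le_mul h8i h8m'
  have h5 : (2*(L*(L*(n+m+2))))*64 ≤ ((i+1)*(m - (s-i-1)))*64 := by nlinarith
  exact Nat.le_of_mul_le_mul_right h5 (by omega)

private lemma arith_hY (n m s θ A d L i : ℕ) (hd : d = n + m + 2)
    (hθeq : θ + (m+1) = (n+1)*s)
    (hA2 : θ < A * d + d) (hiL : A + 1 ≤ i + L) (hin : i ≤ n) (his : i < s)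
    (hsm1 : s - i - 1 ≤ m) :
    (n - i) * (s - i) ≤ (i+1) * (m - (s - i - 1)) + L*d := by
  subst hd
  have hid : (A+1) * (n+m+2) ≤ (i + L) * (n+m+2) := Nat.mul_le_mul_right _ hiL
  zify [show i ≤ n from hin, show i ≤ s by omega, hsm1, show 1 ≤ s - i by omega]
  zify at hθeq hid hA2
  nlinarith [hθeq, hid, hA2]

private lemma arith_rhoL (L : ℕ) (hL : 4 ≤ L) : (1 + 1/(2*(L:ℝ)))^L ≤ 2 := by
  have hLpos : (0:ℝ) < L := by exact_mod_cast (by omega : 0 < L)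
  set x : ℝ := 1/(2*(L:ℝ)) with hxdef
  have hx0 : 0 < x := by positivity
  have hx1 : x ≤ 1/8 := by
    rw [hxdef, div_le_div_iff₀ (by positivity) (by norm_num)]
    have : (4:ℝ) ≤ L := by exact_mod_cast hL
    linarith
  have hber : 1 - (L:ℝ)*x ≤ (1-x)^L := by
    have := one_add_mul_le_pow (a := -x) (by linarith) L
    simpa [sub_eq_add_neg] using this
  have h12 : (L:ℝ)*x = 1/2 := by
    rw [hxdef]; field_simp
  have hhalf : (1/2 : ℝ) ≤ (1-x)^L := by nlinarith [hber]
  have hprod : (1+x)^L * (1-x)^L = (1 - x^2)^L := by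
    rw [← mul_pow]; ring_nf
  have hle1 : (1-x^2)^L ≤ 1 := pow_le_one₀ (by nlinarith) (by nlinarith)
  nlinarith [pow_nonneg (by positivity : (0:ℝ) ≤ 1+x) L, hprod, hle1, hhalf]

private lemma arith_step (FI FI1 X Y L d : ℕ) (he : FI1 * X = FI * Y) (hY : Y ≤ X + L*d)
    (hX2L : 2*(L*(L*d)) ≤ X) (hL : 4 ≤ L) (hXpos : 0 < X) :
    (FI1 : ℝ) ≤ (1 + 1/(2*(L:ℝ))) * FI := by
  have hLpos : (0:ℝ) < L := by exact_mod_cast (by omega : 0 < L)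
  have hXr : (0:ℝ) < X := by exact_mod_cast hXpos
  have hYr : (Y:ℝ) ≤ X + X/(2*L) := by
    have h1 : (Y:ℝ) ≤ X + L*d := by exact_mod_cast hY
    have h2 : ((L:ℝ)*d) * (2*L) ≤ X := by
      have : (2*(L*(L*d)) : ℝ) ≤ X := by exact_mod_cast hX2L
      nlinarith
    have h3 : ((L:ℝ)*d) ≤ (X:ℝ)/(2*L) := by
      rw [le_div_iff₀ (by positivity)]; linarith
    linarith
  have her : (FI1:ℝ) * X = FI * Y := by exact_mod_cast he
  have hkey : (FI1:ℝ) * X ≤ ((1 + 1/(2*(L:ℝ))) * FI) * X := by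
    rw [her]
    calc (FI:ℝ) * Y ≤ FI * ((X:ℝ) + X/(2*L)) :=
        mul_le_mul_of_nonneg_left hYr (Nat.cast_nonneg _)
      _ = ((1 + 1/(2*(L:ℝ))) * FI) * X := by field_simp
  exact le_of_mul_le_mul_right hkey hXr

private lemma arith_L (SL L μ n m : ℕ) (hSL : 64 ≤ SL) (hSLsq : SL * SL ≤ μ + 1)
    (hL16 : 16 * L ≤ SL) (hμn : μ ≤ n) (hμm : μ ≤ m) :
    256*(L*L) ≤ μ + 1 ∧ 256 * L ≤ n + 1 ∧ 256 * L ≤ m + 1 := by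
  refine ⟨by nlinarith, by nlinarith, by nlinarith⟩

lemma key (n m s a : ℕ) (ha : a ≤ s) (h1 : n + m ≤ 4*s) (h2 : 4*s ≤ 3*(n+m)) :
    (f n m s a : ℝ) * Real.sqrt (1 + ((min n m : ℕ) : ℝ)) ≤ 64 * ((n+m).choose s : ℝ) := by
  have hfa : f n m s a ≤ (n+m).choose s := by
    rw [vander]
    exact Finset.single_le_sum (f := fun i => f n m s i) (fun i _ => Nat.zero_le _)
      (mem_range.mpr (by omega))
  have hchoose0 : (0:ℝ) ≤ ((n+m).choose s : ℝ) := Nat.cast_nonneg _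
  set μ := min n m with hμdef
  by_cases hbig : μ ≤ 4095
  · have hs64 : Real.sqrt (1 + (μ:ℝ)) ≤ 64 := by
      have h4 : (1 + (μ:ℝ)) ≤ 4096 := by
        have : (μ:ℝ) ≤ 4095 := by exact_mod_cast hbig
        linarith
      calc Real.sqrt (1 + (μ:ℝ)) ≤ Real.sqrt 4096 := Real.sqrt_le_sqrt h4
        _ = 64 := by
            rw [show (4096:ℝ) = 64^2 by norm_num, Real.sqrt_sq (by norm_num : (0:ℝ) ≤ 64)]
    calc (f n m s a : ℝ) * Real.sqrt (1 + (μ:ℝ))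
        ≤ ((n+m).choose s : ℝ) * 64 :=
          mul_le_mul (by exact_mod_cast hfa) hs64 (Real.sqrt_nonneg _) hchoose0
      _ = 64 * ((n+m).choose s : ℝ) := by ring
  · push_neg at hbig
    have hn4 : 4096 ≤ n := le_trans hbig (by omega)
    have hm4 : 4096 ≤ m := le_trans hbig (by omega)
    have hs1 : 2048 ≤ s := by omega
    have hsN : s < n + m := by omega
    have hμn : μ ≤ n := min_le_left n m
    have hμm : μ ≤ m := min_le_right n m
    have hθle : m + 1 ≤ (n+1)*s := by nlinarith
    set d := n + m + 2 with hddef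
    set θ := (n+1)*s - (m+1) with hθdef
    have hθeq : θ + (m+1) = (n+1)*s := Nat.sub_add_cancel hθle
    set A := θ / d with hAdef
    have hA1 : A * d ≤ θ := Nat.div_mul_le_self θ d
    have hA2 : θ < A * d + d := arith_hA2 θ A d (by omega) hAdef
    clear_value θ
    clear hθdef
    have hAn : A ≤ n := arith_hAn n m s θ A d hddef h1 hθeq hA1 hsN
    clear_value A
    clear hAdef
    have hAs : A < s := by
      by_contra hc
      push_neg at hc
      exact arith_hAs n m s θ A d hddef hθeq hA1 hs1 hc
    have e1 : (n+1)*s + n + 2 ≤ A*d + 2*d := by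
      have hd' : d = n + m + 2 := hddef
      linarith
    have hFA : n + 1 ≤ 4*(A+2) := arith_hFA n m s θ A d hddef h1 e1
    have hFB : m + 1 + 4*s ≤ 4*(m + A + 2) := arith_hFB n m s θ A d hddef h2 e1
    -- square root quantities
    set SL := Nat.sqrt (μ+1) with hSLdef
    have hSL : 64 ≤ SL := by
      rw [hSLdef]
      rw [Nat.le_sqrt]
      omega
    have hSLsq : SL * SL ≤ μ + 1 := Nat.sqrt_le (μ+1)
    have hSLub : μ + 1 < (SL+1)*(SL+1) := Nat.lt_succ_sqrt (μ+1)
    set L := SL / 16 with hLdef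
    have hL16 : 16 * L ≤ SL := by omega
    have hL1 : 4 ≤ L := by omega
    have hL15 : SL ≤ 16*L + 15 := by omega
    clear_value SL L
    clear hSLdef hLdef
    obtain ⟨hLsq, hLn, hLm⟩ := arith_L SL L μ n m hSL hSLsq hL16 hμn hμm
    have hLA : L ≤ A + 1 := by omega
    set P := f n m s (A+1) with hPdef
    -- upward chain
    have up_chain : ∀ k, f n m s (A+1-k) ≤ P := by
      intro k
      induction k with
      | zero => simp [hPdef]
      | succ k ih =>
        rcases le_or_gt (A+1) k with hk | hk
        · rw [show A+1-(k+1) = A+1-k by omega]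
          exact ih
        · set i := A - k with hidef
          have hii : A + 1 - (k+1) = i := by omega
          have hii2 : A + 1 - k = i + 1 := by omega
          rw [hii]
          have hstep : f n m s i ≤ f n m s (i+1) := by
            rcases le_or_gt (s - i) m with him | him
            · apply step_up n m s i (by omega) him
              have hid : i * d ≤ θ := le_trans (Nat.mul_le_mul_right d (by omega)) hA1
              exact arith_gup n m s θ d i hddef hθeq (by omega) (by omega) him hid
            · have hz : m.choose (s - i) = 0 := Nat.choose_eq_zero_of_lt him
              simp [f, hz]
          calc f n m s i ≤ f n m s (i+1) := hstep
            _ = f n m s (A+1-k) := by rw [hii2]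
            _ ≤ P := ih
    -- downward chain
    have down_chain : ∀ k, A+1+k ≤ s → f n m s (A+1+k) ≤ P := by
      intro k
      induction k with
      | zero => intro _; simp [hPdef]
      | succ k ih =>
        intro hks
        set i := A + 1 + k with hidef
        have hii : A+1+(k+1) = i + 1 := by omega
        rw [hii]
        have hstep : f n m s (i+1) ≤ f n m s i := by
          rcases le_or_gt (i+1) n with hin | hin
          · rcases le_or_gt (s - i) (m+1) with him | him
            · apply step_down n m s i (by omega)
              have hid : A * d + d ≤ i * d := by
                calc A*d + d = (A+1)*d := by ring
                  _ ≤ i*d := Nat.mul_le_mul_right d (by omega)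
              exact arith_gdown n m s θ A d i hddef hθeq (by omega) (by omega) him hid hA2
            · have hz : m.choose (s - (i+1)) = 0 := Nat.choose_eq_zero_of_lt (by omega)
              have : f n m s (i+1) = 0 := by simp [f, hz]
              omega
          · have hz : n.choose (i+1) = 0 := Nat.choose_eq_zero_of_lt (by omega)
            have : f n m s (i+1) = 0 := by simp [f, hz]
            omega
        calc f n m s (i+1) ≤ f n m s i := hstep
          _ ≤ P := ih (by omega)
    have max_le : ∀ j, j ≤ s → f n m s j ≤ P := by
      intro j hj
      rcases le_or_gt j (A+1) with hc | hc
      · have := up_chain (A+1-j)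
        rwa [show A+1-(A+1-j) = j by omega] at this
      · have := down_chain (j - (A+1)) (by omega)
        rwa [show A+1+(j-(A+1)) = j by omega] at this
    -- real ratio step
    set ρ : ℝ := 1 + 1/(2*(L:ℝ)) with hρdef
    have hLpos : (0:ℝ) < L := by exact_mod_cast (by omega : 0 < L)
    have hρ1 : (1:ℝ) ≤ ρ := by
      rw [hρdef]
      have : 0 < 1/(2*(L:ℝ)) := by positivity
      linarith
    have hρL : ρ^L ≤ 2 := by
      rw [hρdef]; exact arith_rhoL L hL1
    -- rho chain
    have rho_chain : ∀ j, j ≤ L → (P:ℝ) ≤ ρ^j * f n m s (A+1-j) := by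
      intro j
      induction j with
      | zero => intro _; simp [hPdef]
      | succ j ih =>
        intro hj
        set i := A - j with hidef
        have hiA : i ≤ A := by omega
        have hiL : A + 1 ≤ i + L := by omega
        have h8i : n + 1 ≤ 8*(i+1) := by omega
        have h8m : m + 1 + 8*s ≤ 8*(m+i+1) := by omega
        have hsm1 : s - i - 1 ≤ m := by omega
        have his : i < s := by omega
        have hin : i ≤ n := by omega
        -- X bound
        have hX2L : 2*(L*(L*d)) ≤ (i+1)*(m - (s-i-1)) :=
          arith_hX n m s L μ i d hddef h8i h8m hsm1 hLsq hμn hμm (by omega)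
        have hXpos : 0 < (i+1)*(m - (s-i-1)) := by
          have h8m' : m + 1 ≤ 8*(m - (s-i-1)) := by omega
          exact Nat.mul_pos (by omega) (by omega)
        have hY : (n - i) * (s - i) ≤ (i+1) * (m - (s - i - 1)) + L*d :=
          arith_hY n m s θ A d L i hddef hθeq hA2 hiL hin his hsm1
        -- real step
        have hstep : (f n m s (i+1) : ℝ) ≤ ρ * f n m s i := by
          rw [hρdef]
          exact arith_step (f n m s i) (f n m s (i+1)) ((i+1)*(m - (s-i-1)))
            ((n-i)*(s-i)) L d (f_step n m s i his) hY hX2L hL1 hXpos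
        have hii : A + 1 - j = i + 1 := by omega
        have hii2 : A + 1 - (j+1) = i := by omega
        calc (P:ℝ) ≤ ρ^j * f n m s (A+1-j) := ih (by omega)
          _ = ρ^j * f n m s (i+1) := by rw [hii]
          _ ≤ ρ^j * (ρ * f n m s i) := by
              apply mul_le_mul_of_nonneg_left hstep
              positivity
          _ = ρ^(j+1) * f n m s (A+1-(j+1)) := by rw [hii2]; ring
    -- sum bound
    have hsum : ((n+m).choose s : ℝ) = ∑ i ∈ range (s+1), (f n m s i : ℝ) := by
      rw [vander]; push_cast; rfl
    have hsub : Icc (A+1-L) (A+1) ⊆ range (s+1) := by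
      intro i hi
      simp only [mem_Icc] at hi
      simp only [mem_range]
      omega
    have hlow : ∀ i ∈ Icc (A+1-L) (A+1), (P:ℝ)/2 ≤ (f n m s i : ℝ) := by
      intro i hi
      simp only [mem_Icc] at hi
      set j := A + 1 - i with hjdef
      have hjL : j ≤ L := by omega
      have hij : A + 1 - j = i := by omega
      have hr := rho_chain j hjL
      rw [hij] at hr
      have hρj : ρ^j ≤ 2 := le_trans (pow_le_pow_right₀ hρ1 hjL) hρL
      have : (P:ℝ) ≤ 2 * f n m s i :=
        le_trans hr (mul_le_mul_of_nonneg_right hρj (Nat.cast_nonneg _))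
      linarith
    have hcard : (Icc (A+1-L) (A+1)).card = L+1 := by
      rw [Nat.card_Icc]; omega
    have hsumge : ((L:ℝ)+1) * ((P:ℝ)/2) ≤ ((n+m).choose s : ℝ) := by
      calc ((L:ℝ)+1) * ((P:ℝ)/2)
          = ∑ _i ∈ Icc (A+1-L) (A+1), ((P:ℝ)/2) := by
            rw [sum_const, hcard]; push_cast; ring
        _ ≤ ∑ i ∈ Icc (A+1-L) (A+1), (f n m s i : ℝ) := sum_le_sum hlow
        _ ≤ ∑ i ∈ range (s+1), (f n m s i : ℝ) :=
            sum_le_sum_of_subset_of_nonneg hsub (fun i _ _ => Nat.cast_nonneg _)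
        _ = ((n+m).choose s : ℝ) := hsum.symm
    -- finish
    have hfaP : (f n m s a : ℝ) ≤ (P:ℝ) := by exact_mod_cast max_le a ha
    have hsqrt : Real.sqrt (1 + (μ:ℝ)) ≤ 16*((L:ℝ)+1) := by
      have hub : (1 + (μ:ℝ)) ≤ ((SL:ℝ)+1)^2 := by
        have : ((μ:ℕ) + 1 : ℝ) ≤ (((SL+1)*(SL+1) : ℕ) : ℝ) := by exact_mod_cast le_of_lt hSLub
        push_cast at this
        nlinarith [this]
      calc Real.sqrt (1 + (μ:ℝ)) ≤ Real.sqrt (((SL:ℝ)+1)^2) := Real.sqrt_le_sqrt hub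
        _ = (SL:ℝ)+1 := Real.sqrt_sq (by positivity)
        _ ≤ 16*((L:ℝ)+1) := by
            have : (SL:ℝ) ≤ 16*(L:ℝ) + 15 := by exact_mod_cast hL15
            linarith
    have hP0 : (0:ℝ) ≤ (P:ℝ) := Nat.cast_nonneg _
    calc (f n m s a : ℝ) * Real.sqrt (1 + (μ:ℝ))
        ≤ (P:ℝ) * (16*((L:ℝ)+1)) := mul_le_mul hfaP hsqrt (Real.sqrt_nonneg _) hP0
      _ = 32 * (((L:ℝ)+1) * ((P:ℝ)/2)) := by ring
      _ ≤ 32 * ((n+m).choose s : ℝ) := by linarith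
      _ ≤ 64 * ((n+m).choose s : ℝ) := by linarith

noncomputable def q (t : ℕ) (k : ℤ) : ℝ :=
  if ((t:ℤ) + k) % 2 = 0 ∧ -(t:ℤ) ≤ k then (t.choose (((t:ℤ)+k).toNat / 2) : ℝ) / 2^t else 0

lemma q_nonneg (t : ℕ) (k : ℤ) : 0 ≤ q t k := by
  unfold q
  split
  · positivity
  · exact le_refl 0

lemma q_zero (k : ℤ) : q 0 k = if k = 0 then 1 else 0 := by
  unfold q
  by_cases hk : k = 0
  · subst hk; norm_num
  · rw [if_neg hk]
    by_cases hc : (((0:ℕ):ℤ) + k) % 2 = 0 ∧ -((0:ℕ):ℤ) ≤ k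
    · rw [if_pos hc]
      have h1 : 1 ≤ (((0:ℕ):ℤ) + k).toNat / 2 := by
        simp only [Nat.cast_zero] at hc ⊢
        omega
      have h2 : (Nat.choose 0 ((((0:ℕ):ℤ) + k).toNat / 2)) = 0 :=
        Nat.choose_eq_zero_of_lt (by omega)
      rw [h2]
      norm_num
    · rw [if_neg hc]

lemma q_rec (t : ℕ) (k : ℤ) : q (t+1) k = (1/2) * (q t (k+1) + q t (k-1)) := by
  unfold q
  by_cases hp : ((t:ℤ) + 1 + k) % 2 = 0
  · by_cases hk : -((t:ℤ)+1) ≤ k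
    · by_cases hk2 : (1:ℤ) - t ≤ k
      · -- generic case
        have c1 : (((t+1:ℕ):ℤ) + k) % 2 = 0 ∧ -((t+1:ℕ):ℤ) ≤ k := by
          constructor <;> [push_cast; push_cast] <;> omega
        have c2 : ((t:ℤ) + (k+1)) % 2 = 0 ∧ -(t:ℤ) ≤ k+1 := by omega
        have c3 : ((t:ℤ) + (k-1)) % 2 = 0 ∧ -(t:ℤ) ≤ k-1 := by omega
        rw [if_pos c1, if_pos c2, if_pos c3]
        set j := ((t:ℤ) + (k-1)).toNat / 2 with hjdef
        have e2 : ((t:ℤ) + (k+1)).toNat/2 = j + 1 := by omega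
        have e1 : (((t+1:ℕ):ℤ) + k).toNat/2 = j + 1 := by push_cast; omega
        rw [e1, e2]
        rw [Nat.choose_succ_succ]
        push_cast
        rw [pow_succ]
        field_simp
        ring
      · -- k = -(t+1) or smaller with parity: k ≤ -t, parity even with t+1+k even ⇒ k = -(t+1) or k ≤ -(t+3)
        by_cases hk3 : k = -((t:ℤ)+1)
        · have c1 : (((t+1:ℕ):ℤ) + k) % 2 = 0 ∧ -((t+1:ℕ):ℤ) ≤ k := by push_cast; omega
          have c2 : ((t:ℤ) + (k+1)) % 2 = 0 ∧ -(t:ℤ) ≤ k+1 := by omega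
          have c3 : ¬(((t:ℤ) + (k-1)) % 2 = 0 ∧ -(t:ℤ) ≤ k-1) := by omega
          rw [if_pos c1, if_pos c2, if_neg c3]
          have e1 : (((t+1:ℕ):ℤ) + k).toNat/2 = 0 := by push_cast; omega
          have e2 : ((t:ℤ) + (k+1)).toNat/2 = 0 := by omega
          rw [e1, e2]
          rw [Nat.choose_zero_right, Nat.choose_zero_right, pow_succ]
          push_cast
          field_simp
          ring
        · -- k ≤ -(t+3)
          have c1 : ¬((((t+1:ℕ):ℤ) + k) % 2 = 0 ∧ -((t+1:ℕ):ℤ) ≤ k) := by push_cast; omega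
          have c2 : ¬(((t:ℤ) + (k+1)) % 2 = 0 ∧ -(t:ℤ) ≤ k+1) := by omega
          have c3 : ¬(((t:ℤ) + (k-1)) % 2 = 0 ∧ -(t:ℤ) ≤ k-1) := by omega
          rw [if_neg c1, if_neg c2, if_neg c3]
          ring
    · have c1 : ¬((((t+1:ℕ):ℤ) + k) % 2 = 0 ∧ -((t+1:ℕ):ℤ) ≤ k) := by push_cast; omega
      have c2 : ¬(((t:ℤ) + (k+1)) % 2 = 0 ∧ -(t:ℤ) ≤ k+1) := by omega
      have c3 : ¬(((t:ℤ) + (k-1)) % 2 = 0 ∧ -(t:ℤ) ≤ k-1) := by omega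
      rw [if_neg c1, if_neg c2, if_neg c3]
      ring
  · have c1 : ¬((((t+1:ℕ):ℤ) + k) % 2 = 0 ∧ -((t+1:ℕ):ℤ) ≤ k) := by push_cast; omega
    have c2 : ¬(((t:ℤ) + (k+1)) % 2 = 0 ∧ -(t:ℤ) ≤ k+1) := by omega
    have c3 : ¬(((t:ℤ) + (k-1)) % 2 = 0 ∧ -(t:ℤ) ≤ k-1) := by omega
    rw [if_neg c1, if_neg c2, if_neg c3]
    ring


lemma p_eq (p : ℕ → ℤ × ℤ → ℝ)
    (h0 : ∀ x : ℤ × ℤ, p 0 x = if x = 0 then 1 else 0)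
    (hrec : ∀ (t : ℕ) (x : ℤ × ℤ),
      p (t + 1) x = (1 / 4) * (p t (x + (1, 0)) + p t (x - (1, 0))
        + p t (x + (0, 1)) + p t (x - (0, 1)))) :
    ∀ t x, p t x = q t (x.1 + x.2) * q t (x.1 - x.2) := by
  intro t
  induction t with
  | zero =>
    intro x
    rw [h0, q_zero, q_zero]
    by_cases hx : x = 0
    · subst hx; norm_num
    · rw [if_neg hx]
      have : ¬(x.1 + x.2 = 0 ∧ x.1 - x.2 = 0) := by
        intro ⟨h1, h2⟩
        apply hx
        have e1 : x.1 = 0 := by omega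
        have e2 : x.2 = 0 := by omega
        exact Prod.ext e1 e2
      by_cases h1 : x.1 + x.2 = 0
      · rw [if_pos h1, if_neg (by tauto)]
        ring
      · rw [if_neg h1]
        ring
  | succ t ih =>
    intro x
    rw [hrec]
    have e1 : x + ((1:ℤ), (0:ℤ)) = (x.1 + 1, x.2) := by ext <;> simp
    have e2 : x - ((1:ℤ), (0:ℤ)) = (x.1 - 1, x.2) := by ext <;> simp
    have e3 : x + ((0:ℤ), (1:ℤ)) = (x.1, x.2 + 1) := by ext <;> simp
    have e4 : x - ((0:ℤ), (1:ℤ)) = (x.1, x.2 - 1) := by ext <;> simp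
    rw [e1, e2, e3, e4, ih, ih, ih, ih]
    rw [q_rec, q_rec]
    simp only
    rw [show x.1 + 1 + x.2 = (x.1 + x.2) + 1 by ring, show x.1 + 1 - x.2 = (x.1 - x.2) + 1 by ring,
      show x.1 - 1 + x.2 = (x.1 + x.2) - 1 by ring, show x.1 - 1 - x.2 = (x.1 - x.2) - 1 by ring,
      show x.1 + (x.2 + 1) = (x.1 + x.2) + 1 by ring, show x.1 - (x.2 + 1) = (x.1 - x.2) - 1 by ring,
      show x.1 + (x.2 - 1) = (x.1 + x.2) - 1 by ring, show x.1 - (x.2 - 1) = (x.1 - x.2) + 1 by ring]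
    ring


lemma qratio (n m : ℕ) (k j : ℤ) (hk1 : -((n:ℤ)+m) ≤ 2*k) (hk2 : 2*k ≤ (n:ℤ)+m)
    (hq : q (n+m) k ≠ 0) :
    q n j * q m (k - j) / q (n+m) k ≤ 64 / Real.sqrt (1 + ((min n m : ℕ):ℝ)) := by
  have hsqrtpos : 0 < Real.sqrt (1 + ((min n m : ℕ):ℝ)) := Real.sqrt_pos.mpr (by positivity)
  have hRHS : (0:ℝ) ≤ 64 / Real.sqrt (1 + ((min n m : ℕ):ℝ)) := by positivity
  by_cases hn0 : q n j = 0
  · rw [hn0, zero_mul, zero_div]; exact hRHS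
  by_cases hm0 : q m (k - j) = 0
  · rw [hm0, mul_zero, zero_div]; exact hRHS
  unfold q at hn0 hm0 hq ⊢
  have cn : ((n:ℤ) + j) % 2 = 0 ∧ -(n:ℤ) ≤ j := by
    by_contra h; exact hn0 (if_neg h)
  have cm : ((m:ℤ) + (k-j)) % 2 = 0 ∧ -(m:ℤ) ≤ k-j := by
    by_contra h; exact hm0 (if_neg h)
  have ct : (((n+m:ℕ):ℤ) + k) % 2 = 0 ∧ -((n+m:ℕ):ℤ) ≤ k := by
    by_contra h; exact hq (if_neg h)
  rw [if_pos cn, if_pos cm, if_pos ct]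
  rw [if_pos ct] at hq
  set a := ((n:ℤ)+j).toNat/2 with hadef
  set b := ((m:ℤ)+(k-j)).toNat/2 with hbdef
  set st := (((n+m:ℕ):ℤ)+k).toNat/2 with hstdef
  obtain ⟨cn1, cn2⟩ := cn
  obtain ⟨cm1, cm2⟩ := cm
  obtain ⟨ct1, ct2⟩ := ct
  push_cast at ct1 ct2
  have hcast : (((n+m:ℕ):ℤ)) = (n:ℤ) + m := by push_cast; ring
  rw [hcast] at hstdef
  have has : a ≤ st := by omega
  have hb : st - a = b := by omega
  have hs1 : n + m ≤ 4*st := by omega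
  have hs2 : 4*st ≤ 3*(n+m) := by omega
  have hCt : (0:ℝ) < (((n+m).choose st : ℕ) : ℝ) := by
    have hne : ((n+m).choose st) ≠ 0 := by
      intro h
      apply hq
      rw [h]
      norm_num
    have : 0 < (n+m).choose st := Nat.pos_of_ne_zero hne
    exact_mod_cast this
  have hkey := key n m st a has hs1 hs2
  unfold f at hkey
  rw [hb] at hkey
  have hformula : ((n.choose a : ℝ)/2^n) * ((m.choose b : ℝ)/2^m) /
      (((n+m).choose st : ℝ)/2^(n+m)) =
      ((n.choose a : ℝ) * (m.choose b : ℝ)) / ((n+m).choose st : ℝ) := by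
    rw [pow_add]
    field_simp
    try ring
  rw [hformula, div_le_div_iff₀ hCt hsqrtpos]
  calc (n.choose a : ℝ) * (m.choose b : ℝ) * Real.sqrt (1 + ((min n m : ℕ):ℝ))
      = ((n.choose a * m.choose b : ℕ) : ℝ) * Real.sqrt (1 + ((min n m : ℕ):ℝ)) := by
        push_cast; ring
    _ ≤ 64 * ((n+m).choose st : ℝ) := hkey

end MRB

/-- There is `C₂` such that for the simple random walk on `ℤ²`: for all `t ≥ 1`,
`x` with `|x|₁ ≤ t/2`, `0 ≤ n ≤ t`, and `z` with `|z|₁ ≤ n/2` and `|x-z|₁ ≤ (t-n)/2`,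
`P(S_n = z, S_t = x)/P(S_t = x) = p(n,z)p(t-n,x-z)/p(t,x) ≤ C₂/(1 + min(n, t-n))`. -/
theorem markov_ratio_bound (p : ℕ → ℤ × ℤ → ℝ)
    (h0 : ∀ x : ℤ × ℤ, p 0 x = if x = 0 then 1 else 0)
    (hrec : ∀ (t : ℕ) (x : ℤ × ℤ),
      p (t + 1) x = (1 / 4) * (p t (x + (1, 0)) + p t (x - (1, 0))
        + p t (x + (0, 1)) + p t (x - (0, 1)))) :
    ∃ C₂ : ℝ, 0 < C₂ ∧ ∀ (t n : ℕ) (x z : ℤ × ℤ), 1 ≤ t → n ≤ t →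
      ((|x.1| + |x.2| : ℤ) : ℝ) ≤ t / 2 →
      ((|z.1| + |z.2| : ℤ) : ℝ) ≤ n / 2 →
      ((|(x - z).1| + |(x - z).2| : ℤ) : ℝ) ≤ ((t : ℝ) - n) / 2 →
      p n z * p (t - n) (x - z) / p t x ≤ C₂ / (1 + (min n (t - n) : ℕ)) := by
  refine ⟨4096, by norm_num, ?_⟩
  intro t n x z ht hn hx hz hxz
  have hμ0 : (0:ℝ) ≤ 1 + ((min n (t - n) : ℕ) : ℝ) := by positivity
  have hμpos : (0:ℝ) < 1 + ((min n (t - n) : ℕ) : ℝ) := by positivity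
  set m := t - n with hmdef
  have htm : n + m = t := by omega
  have hpeq := MRB.p_eq p h0 hrec
  rw [hpeq, hpeq, hpeq]
  have ex1 : (x - z).1 = x.1 - z.1 := rfl
  have ex2 : (x - z).2 = x.2 - z.2 := rfl
  rw [ex1, ex2]
  set u := x.1 + x.2 with hudef
  set v := x.1 - x.2 with hvdef
  set ju := z.1 + z.2 with hjudef
  set jv := z.1 - z.2 with hjvdef
  have eu : x.1 - z.1 + (x.2 - z.2) = u - ju := by rw [hudef, hjudef]; ring
  have ev : x.1 - z.1 - (x.2 - z.2) = v - jv := by rw [hvdef, hjvdef]; ring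
  rw [eu, ev]
  by_cases hden : MRB.q t u * MRB.q t v = 0
  · rw [hden, div_zero]
    positivity
  · obtain ⟨hqu, hqv⟩ := mul_ne_zero_iff.mp hden
    -- |u|, |v| bounds
    have hxZ : 2*(|x.1| + |x.2|) ≤ (t:ℤ) := by
      have h2 : ((2*(|x.1|+|x.2|) : ℤ):ℝ) ≤ (t:ℝ) := by push_cast; push_cast at hx; linarith
      exact_mod_cast h2
    have habs_u : |u| ≤ |x.1| + |x.2| := abs_add_le x.1 x.2
    have habs_v : |v| ≤ |x.1| + |x.2| := abs_sub x.1 x.2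
    have hu1 : -((n:ℤ)+m) ≤ 2*u := by
      have := neg_abs_le u
      have hc : ((n:ℤ)+m) = (t:ℤ) := by exact_mod_cast congrArg (Nat.cast : ℕ → ℤ) htm
      rw [hc]
      have := abs_nonneg u
      omega
    have hu2 : 2*u ≤ (n:ℤ)+m := by
      have := le_abs_self u
      have hc : ((n:ℤ)+m) = (t:ℤ) := by exact_mod_cast congrArg (Nat.cast : ℕ → ℤ) htm
      rw [hc]
      omega
    have hv1 : -((n:ℤ)+m) ≤ 2*v := by
      have := neg_abs_le v
      have hc : ((n:ℤ)+m) = (t:ℤ) := by exact_mod_cast congrArg (Nat.cast : ℕ → ℤ) htm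
      rw [hc]
      omega
    have hv2 : 2*v ≤ (n:ℤ)+m := by
      have := le_abs_self v
      have hc : ((n:ℤ)+m) = (t:ℤ) := by exact_mod_cast congrArg (Nat.cast : ℕ → ℤ) htm
      rw [hc]
      omega
    have hqu' : MRB.q (n+m) u ≠ 0 := by rw [htm]; exact hqu
    have hqv' : MRB.q (n+m) v ≠ 0 := by rw [htm]; exact hqv
    have h1 := MRB.qratio n m u ju hu1 hu2 hqu'
    have h2 := MRB.qratio n m v jv hv1 hv2 hqv'
    rw [htm] at h1 h2
    have hsplit : MRB.q n ju * MRB.q n jv * (MRB.q m (u - ju) * MRB.q m (v - jv)) /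
        (MRB.q t u * MRB.q t v) =
        (MRB.q n ju * MRB.q m (u - ju) / MRB.q t u) *
        (MRB.q n jv * MRB.q m (v - jv) / MRB.q t v) := by
      field_simp
    rw [hsplit]
    have hf1 : (0:ℝ) ≤ MRB.q n ju * MRB.q m (u - ju) / MRB.q t u := by
      have h1' := MRB.q_nonneg t u
      have := MRB.q_nonneg n ju
      have := MRB.q_nonneg m (u - ju)
      positivity
    have hRHS2 : (0:ℝ) ≤ 64 / Real.sqrt (1 + ((min n m : ℕ):ℝ)) := by positivity
    have hmul : (MRB.q n ju * MRB.q m (u - ju) / MRB.q t u) *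
        (MRB.q n jv * MRB.q m (v - jv) / MRB.q t v) ≤
        (64 / Real.sqrt (1 + ((min n m : ℕ):ℝ))) *
        (64 / Real.sqrt (1 + ((min n m : ℕ):ℝ))) :=
      mul_le_mul h1 h2 (by
        have := MRB.q_nonneg t v
        have := MRB.q_nonneg n jv
        have := MRB.q_nonneg m (v - jv)
        positivity) hRHS2
    refine le_trans hmul (le_of_eq ?_)
    rw [div_mul_div_comm]
    rw [Real.mul_self_sqrt (by positivity)]
    norm_num
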